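/- Let f : ℝ^n → ℂ be a measurable function and suppose there exist constants C > 0 and σ > n − 1 such that |f(x)| ≤ C·‖x‖^{−σ} for all x with ‖x‖ ≥ 1. Then there exists a constant C' > 0 such that for every ω ∈ ℝ^n with ‖ω‖ = 1 and every real t with |t| ≥ 1: ∫_{{x : ⟨ω,x⟩ = t}} |f(x)| dH^{n−1}(x) ≤ C'·|t|^{n−1−σ}. -/

import Mathlib

open MeasureTheory Set

lemma lemA (m : ℕ) : ∃ c : ENNReal, c ≠ ⊤ ∧
    (μH[(m:ℝ)] : Measure (EuclideanSpace ℝ (Fin m))) ≤ c • (volume : Measure (EuclideanSpace ℝ (Fin m))) := by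
  set K : NNReal := ((Fintype.card (Fin m) : NNReal) ^ ((1:ENNReal) / 2).toReal)
  refine ⟨(K : ENNReal) ^ (m:ℝ), ENNReal.rpow_ne_top_of_nonneg (by positivity) ENNReal.coe_ne_top, ?_⟩
  rw [Measure.le_iff]
  intro s hs
  have hpi : (μH[(m:ℝ)] : Measure (Fin m → ℝ)) = volume := by
    have := hausdorffMeasure_pi_real (ι := Fin m)
    rwa [Fintype.card_fin] at this
  have hanti : AntilipschitzWith K (WithLp.equiv 2 (∀ _ : Fin m, ℝ)) :=
    PiLp.antilipschitzWith_ofLp 2 _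
  have hlip : LipschitzWith K (WithLp.equiv 2 (∀ _ : Fin m, ℝ)).symm :=
    hanti.to_rightInverse (Equiv.rightInverse_symm _)
  have h1 : s = (WithLp.equiv 2 (∀ _ : Fin m, ℝ)).symm '' ((WithLp.equiv 2 (∀ _ : Fin m, ℝ)) '' s) := by
    rw [Equiv.symm_image_image]
  have himg : (WithLp.equiv 2 (∀ _ : Fin m, ℝ)) '' s
      = (WithLp.equiv 2 (∀ _ : Fin m, ℝ)).symm ⁻¹' s := Equiv.image_eq_preimage_symm _ _
  calc μH[(m:ℝ)] s ≤ (K : ENNReal) ^ (m:ℝ) * μH[(m:ℝ)] ((WithLp.equiv 2 (∀ _ : Fin m, ℝ)) '' s) := by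
        nth_rewrite 1 [h1]
        exact hlip.hausdorffMeasure_image_le (by positivity) _
    _ = (K : ENNReal) ^ (m:ℝ) * volume ((WithLp.equiv 2 (∀ _ : Fin m, ℝ)) '' s) := by rw [hpi]
    _ = ((K : ENNReal) ^ (m:ℝ) • volume) s := by
        rw [himg, WithLp.equiv_symm_apply, (PiLp.volume_preserving_toLp (Fin m)).measure_preimage hs.nullMeasurableSet]
        rfl


lemma lemPt (σ : ℝ) (hσ0 : 0 < σ) (a : ℝ) (ha : 0 ≤ a) :
    (1 + a^2) ^ (-(σ/2)) ≤ 2 ^ (σ/2) * (1 + a) ^ (-σ) := by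
  have key : (1+a)^σ ≤ 2^(σ/2) * (1+a^2)^(σ/2) := by
    have h1 : (1+a)^σ = (((1+a)^(2:ℕ) : ℝ))^(σ/2) := by
      rw [← Real.rpow_natCast (1+a) 2, ← Real.rpow_mul (by positivity)]
      congr 1
      push_cast
      ring
    rw [h1, ← Real.mul_rpow (by norm_num) (by positivity)]
    exact Real.rpow_le_rpow (by positivity) (by nlinarith [sq_nonneg (1-a)]) (by positivity)
  have hX : (0:ℝ) < (1+a^2)^(σ/2) := by positivity
  have hY : (0:ℝ) < (1+a)^σ := by positivity
  have h2 : (0:ℝ) < (2:ℝ)^(σ/2) := by positivity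
  rw [Real.rpow_neg (by positivity), Real.rpow_neg (by positivity)]
  rw [inv_le_iff_one_le_mul₀ hX]
  calc (1:ℝ) = (1+a)^σ * ((1+a)^σ)⁻¹ := by field_simp
    _ ≤ (2^(σ/2) * (1+a^2)^(σ/2)) * ((1+a)^σ)⁻¹ := by gcongr
    _ = 2 ^ (σ/2) * ((1+a)^σ)⁻¹ * (1+a^2)^(σ/2) := by ring

lemma lemI (m : ℕ) (σ : ℝ) (hσ : (m:ℝ) < σ) :
    (∫⁻ z : EuclideanSpace ℝ (Fin m), ENNReal.ofReal ((1 + ‖z‖^2) ^ (-(σ/2)))) < ⊤ := by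
  have hσ0 : 0 < σ := lt_of_le_of_lt (Nat.cast_nonneg m) hσ
  have hb : ∀ z : EuclideanSpace ℝ (Fin m),
      ENNReal.ofReal ((1 + ‖z‖^2) ^ (-(σ/2))) ≤
        ENNReal.ofReal (2 ^ (σ/2)) * ENNReal.ofReal ((1 + ‖z‖) ^ (-σ)) := fun z => by
    rw [← ENNReal.ofReal_mul (by positivity)]
    exact ENNReal.ofReal_le_ofReal (lemPt σ hσ0 ‖z‖ (norm_nonneg z))
  calc (∫⁻ z : EuclideanSpace ℝ (Fin m), ENNReal.ofReal ((1 + ‖z‖^2) ^ (-(σ/2))))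
      ≤ ∫⁻ z : EuclideanSpace ℝ (Fin m),
          ENNReal.ofReal (2 ^ (σ/2)) * ENNReal.ofReal ((1 + ‖z‖) ^ (-σ)) := lintegral_mono hb
    _ = ENNReal.ofReal (2 ^ (σ/2)) * ∫⁻ z : EuclideanSpace ℝ (Fin m),
          ENNReal.ofReal ((1 + ‖z‖) ^ (-σ)) := lintegral_const_mul' _ _ ENNReal.ofReal_ne_top
    _ < ⊤ := by
        apply ENNReal.mul_lt_top ENNReal.ofReal_lt_top
        apply finite_integral_one_add_norm
        rwa [finrank_euclideanSpace_fin]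

lemma lemC (m : ℕ) (σ : ℝ) (hσ : (m:ℝ) < σ) :
    ∃ I : ENNReal, I ≠ ⊤ ∧ ∀ t : ℝ, 1 ≤ |t| →
      (∫⁻ y : EuclideanSpace ℝ (Fin m), ENNReal.ofReal ((t^2 + ‖y‖^2) ^ (-(σ/2))))
        ≤ ENNReal.ofReal (|t| ^ ((m:ℝ) - σ)) * I := by
  have hσ0 : 0 < σ := lt_of_le_of_lt (Nat.cast_nonneg m) hσ
  refine ⟨_, (lemI m σ hσ).ne, fun t ht => le_of_eq ?_⟩
  have ht0 : t ≠ 0 := fun h => by simp [h] at ht; linarith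
  have htpos : (0:ℝ) < |t| := abs_pos.mpr ht0
  have hg : Measurable fun y : EuclideanSpace ℝ (Fin m) =>
      ENNReal.ofReal ((t^2 + ‖y‖^2) ^ (-(σ/2))) := by fun_prop
  have hmap := Measure.map_addHaar_smul (volume : Measure (EuclideanSpace ℝ (Fin m))) ht0
  rw [finrank_euclideanSpace_fin, abs_inv] at hmap
  have habs : (0:ℝ) < |t ^ m| := by positivity
  have hvol : (volume : Measure (EuclideanSpace ℝ (Fin m)))
      = ENNReal.ofReal |t ^ m| • Measure.map (t • ·) volume := by
    rw [hmap, smul_smul, ← ENNReal.ofReal_mul (le_of_lt habs), mul_inv_cancel₀ habs.ne']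
    simp
  calc (∫⁻ y : EuclideanSpace ℝ (Fin m), ENNReal.ofReal ((t^2 + ‖y‖^2) ^ (-(σ/2))))
      = ENNReal.ofReal |t ^ m| * ∫⁻ y, ENNReal.ofReal ((t^2 + ‖y‖^2) ^ (-(σ/2)))
          ∂(Measure.map (t • ·) volume) := by
        nth_rewrite 1 [hvol]; rw [lintegral_smul_measure, smul_eq_mul]
    _ = ENNReal.ofReal |t ^ m| * ∫⁻ z : EuclideanSpace ℝ (Fin m),
          ENNReal.ofReal ((t^2 + ‖t • z‖^2) ^ (-(σ/2))) := by
        rw [lintegral_map hg (measurable_const_smul t)]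
    _ = ENNReal.ofReal |t ^ m| * (ENNReal.ofReal ((t^2) ^ (-(σ/2))) *
          ∫⁻ z : EuclideanSpace ℝ (Fin m), ENNReal.ofReal ((1 + ‖z‖^2) ^ (-(σ/2)))) := by
        congr 1
        rw [← lintegral_const_mul' _ _ ENNReal.ofReal_ne_top]
        apply lintegral_congr
        intro z
        rw [← ENNReal.ofReal_mul (by positivity), ← Real.mul_rpow (by positivity) (by positivity)]
        congr 2
        rw [norm_smul, Real.norm_eq_abs]
        rw [mul_pow, sq_abs]
        ring
    _ = ENNReal.ofReal (|t| ^ ((m:ℝ) - σ)) *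
          ∫⁻ z : EuclideanSpace ℝ (Fin m), ENNReal.ofReal ((1 + ‖z‖^2) ^ (-(σ/2))) := by
        rw [← mul_assoc, ← ENNReal.ofReal_mul (le_of_lt habs)]
        congr 2
        rw [abs_pow, ← Real.rpow_natCast |t| m]
        have h1 : (t^2 : ℝ) = |t| ^ (2:ℝ) := by
          rw [Real.rpow_two, sq_abs]
        rw [h1, ← Real.rpow_mul (abs_nonneg t), ← Real.rpow_add htpos]
        ring_nf


noncomputable section

theorem stmt_13 (n : ℕ) (hn : 2 ≤ n)
    (f : EuclideanSpace ℝ (Fin n) → ℂ) (hf : Measurable f)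
    (C : ℝ) (hC : 0 < C) (σ : ℝ) (hσ : (n : ℝ) - 1 < σ)
    (hbound : ∀ x : EuclideanSpace ℝ (Fin n), 1 ≤ ‖x‖ → ‖f x‖ ≤ C * ‖x‖ ^ (-σ)) :
    ∃ C' > (0 : ℝ), ∀ ω : EuclideanSpace ℝ (Fin n), ‖ω‖ = 1 → ∀ t : ℝ, 1 ≤ |t| →
      ∫⁻ x in {x : EuclideanSpace ℝ (Fin n) | (inner ℝ ω x : ℝ) = t},
          (‖f x‖₊ : ENNReal) ∂(μH[(n : ℝ) - 1]) ≤
        ENNReal.ofReal (C' * |t| ^ ((n : ℝ) - 1 - σ)) := by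
  set m : ℕ := n - 1 with hm_def
  have hm : (m : ℝ) = (n : ℝ) - 1 := by
    rw [hm_def, Nat.cast_sub (by omega)]; norm_num
  have hmσ : (m : ℝ) < σ := by rw [hm]; exact hσ
  obtain ⟨c, hc_ne, hc_le⟩ := lemA m
  obtain ⟨I, hI_ne, hI⟩ := lemC m σ hmσ
  refine ⟨C * (c.toReal + 1) * (I.toReal + 1), by positivity, ?_⟩
  intro ω hω t ht
  have hω0 : ω ≠ 0 := fun h => by rw [h, norm_zero] at hω; norm_num at hω
  -- the orthogonal complement and its orthonormal basis
  set K : Submodule ℝ (EuclideanSpace ℝ (Fin n)) := (ℝ ∙ ω)ᗮ with hK_def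
  have hfr : Module.finrank ℝ K = m := by
    have h1 : Module.finrank ℝ (ℝ ∙ ω) = 1 := finrank_span_singleton hω0
    have h2 := Submodule.finrank_add_finrank_orthogonal (K := (ℝ ∙ ω))
    rw [h1, finrank_euclideanSpace_fin] at h2
    rw [hK_def]
    omega
  set b : OrthonormalBasis (Fin m) ℝ K :=
    (stdOrthonormalBasis ℝ K).reindex (finCongr hfr) with hb_def
  set φ : EuclideanSpace ℝ (Fin m) → EuclideanSpace ℝ (Fin n) :=
    fun y => t • ω + ((b.repr.symm y : K) : EuclideanSpace ℝ (Fin n)) with hφ_def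
  have hφ_iso : Isometry φ := by
    have h1 : Isometry fun x : EuclideanSpace ℝ (Fin n) => t • ω + x := isometry_add_left _
    have h2 : Isometry (K.subtypeₗᵢ) := K.subtypeₗᵢ.isometry
    have h3 : Isometry (b.repr.symm) := b.repr.symm.isometry
    exact h1.comp (h2.comp h3)
  have hKmem : ∀ v : EuclideanSpace ℝ (Fin n), v ∈ K ↔ (inner ℝ ω v : ℝ) = 0 := fun v =>
    Submodule.mem_orthogonal_singleton_iff_inner_right
  have hrange : Set.range φ = {x : EuclideanSpace ℝ (Fin n) | (inner ℝ ω x : ℝ) = t} := by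
    ext x
    constructor
    · rintro ⟨y, rfl⟩
      have hv : ((b.repr.symm y : K) : EuclideanSpace ℝ (Fin n)) ∈ K := (b.repr.symm y).2
      simp only [Set.mem_setOf_eq, hφ_def, inner_add_right, real_inner_smul_right,
        (hKmem _).mp hv, add_zero]
      rw [real_inner_self_eq_norm_sq, hω]
      ring
    · intro hx
      have hv : x - t • ω ∈ K := by
        rw [hKmem]
        rw [inner_sub_right, real_inner_smul_right, real_inner_self_eq_norm_sq, hω]
        simp only [Set.mem_setOf_eq] at hx
        rw [hx]; ring
      exact ⟨b.repr ⟨x - t • ω, hv⟩, by simp [hφ_def]⟩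
  have hnormφ : ∀ y : EuclideanSpace ℝ (Fin m), ‖φ y‖^2 = t^2 + ‖y‖^2 := by
    intro y
    have hv : ((b.repr.symm y : K) : EuclideanSpace ℝ (Fin n)) ∈ K := (b.repr.symm y).2
    have hinner : (inner ℝ (t • ω) ((b.repr.symm y : K) : EuclideanSpace ℝ (Fin n)) : ℝ) = 0 := by
      rw [real_inner_smul_left, (hKmem _).mp hv]; ring
    rw [hφ_def]
    simp only
    rw [norm_add_sq_real, hinner, norm_smul, Real.norm_eq_abs, hω]
    have : ‖((b.repr.symm y : K) : EuclideanSpace ℝ (Fin n))‖ = ‖y‖ := by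
      rw [Submodule.norm_coe]
      exact b.repr.symm.norm_map y
    rw [this]
    rw [mul_one, sq_abs]
    ring
  -- pointwise bound along the hyperplane
  have hpt : ∀ y : EuclideanSpace ℝ (Fin m),
      (‖f (φ y)‖₊ : ENNReal) ≤ ENNReal.ofReal C * ENNReal.ofReal ((t^2 + ‖y‖^2) ^ (-(σ/2))) := by
    intro y
    have h1le : (1:ℝ) ≤ ‖φ y‖ := by
      nlinarith [hnormφ y, sq_nonneg ‖y‖, sq_abs t, abs_nonneg t, norm_nonneg (φ y),
        sq_nonneg (‖φ y‖ - 1), sq_nonneg (|t| - 1)]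
    have hb1 := hbound (φ y) h1le
    have heq : ‖φ y‖ ^ (-σ) = (t^2 + ‖y‖^2) ^ (-(σ/2)) := by
      rw [← hnormφ y, ← Real.rpow_natCast ‖φ y‖ 2, ← Real.rpow_mul (norm_nonneg _)]
      congr 1
      push_cast
      ring
    rw [← ENNReal.ofReal_mul hC.le, ← heq]
    have : (‖f (φ y)‖₊ : ENNReal) = ENNReal.ofReal ‖f (φ y)‖ := by
      rw [ofReal_norm]; rfl
    rw [this]
    exact ENNReal.ofReal_le_ofReal hb1
  have hd0 : (0:ℝ) ≤ (m:ℝ) := Nat.cast_nonneg m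
  rw [← hm]
  calc ∫⁻ x in {x : EuclideanSpace ℝ (Fin n) | (inner ℝ ω x : ℝ) = t},
          (‖f x‖₊ : ENNReal) ∂(μH[(m:ℝ)])
      = ∫⁻ x, (‖f x‖₊ : ENNReal) ∂((μH[(m:ℝ)] :
          Measure (EuclideanSpace ℝ (Fin n))).restrict (Set.range φ)) := by rw [hrange]
    _ = ∫⁻ x, (‖f x‖₊ : ENNReal) ∂(Measure.map φ μH[(m:ℝ)]) := by
        rw [hφ_iso.map_hausdorffMeasure (Or.inl hd0)]
    _ = ∫⁻ y, (‖f (φ y)‖₊ : ENNReal) ∂(μH[(m:ℝ)]) :=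
        lintegral_map hf.enorm hφ_iso.continuous.measurable
    _ ≤ ∫⁻ y, ENNReal.ofReal C * ENNReal.ofReal ((t^2 + ‖y‖^2) ^ (-(σ/2))) ∂(μH[(m:ℝ)]) :=
        lintegral_mono hpt
    _ ≤ ∫⁻ y, ENNReal.ofReal C * ENNReal.ofReal ((t^2 + ‖y‖^2) ^ (-(σ/2)))
          ∂(c • (volume : Measure (EuclideanSpace ℝ (Fin m)))) := lintegral_mono' hc_le le_rfl
    _ = c * (ENNReal.ofReal C *
          ∫⁻ y : EuclideanSpace ℝ (Fin m), ENNReal.ofReal ((t^2 + ‖y‖^2) ^ (-(σ/2)))) := by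
        rw [lintegral_smul_measure, smul_eq_mul, lintegral_const_mul' _ _ ENNReal.ofReal_ne_top]
    _ ≤ c * (ENNReal.ofReal C * (ENNReal.ofReal (|t| ^ ((m:ℝ) - σ)) * I)) := by
        gcongr
        exact hI t ht
    _ ≤ ENNReal.ofReal (c.toReal + 1) * (ENNReal.ofReal C *
          (ENNReal.ofReal (|t| ^ ((m:ℝ) - σ)) * ENNReal.ofReal (I.toReal + 1))) := by
        gcongr
        · exact le_trans (le_of_eq (ENNReal.ofReal_toReal hc_ne).symm)
            (ENNReal.ofReal_le_ofReal (by linarith))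
        · exact le_trans (le_of_eq (ENNReal.ofReal_toReal hI_ne).symm)
            (ENNReal.ofReal_le_ofReal (by linarith))
    _ = ENNReal.ofReal (C * (c.toReal + 1) * (I.toReal + 1) * |t| ^ ((m:ℝ) - σ)) := by
        rw [← ENNReal.ofReal_mul (by positivity), ← ENNReal.ofReal_mul (by positivity),
          ← ENNReal.ofReal_mul (by positivity)]
        congr 1
        have h1 : (0:ℝ) ≤ c.toReal := ENNReal.toReal_nonneg
        have h2 : (0:ℝ) ≤ I.toReal := ENNReal.toReal_nonneg
        ring
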